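/- Fix an integer d ≥ 3 and set λ := (d − 2)/2. Define h : ℕ → ℝ by h(1) := 1/4, h(2m) := m · ((2m − 3)‼)² / π for every m ≥ 1 (natural-number subtraction, so (2·1 − 3)‼ = 0‼ = 1), and h(k) := 0 for all other k. For ℓ ∈ ℕ define β_ℓ := λ · Σ'_{m ∈ ℕ} h(ℓ + 2m) / ( 2^{ℓ+2m} · m! · (λ)_{ℓ+m+1} ), where (a)_n denotes the Pochhammer symbol a(a+1)⋯(a+n−1). Then β_1 = 1/(4d) and β_0 < β_1. -/

import Mathlib

/-- The sequence of iterated derivatives at `0` of `h(u) = u(π - arccos u)/(2π)`: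
`h 1 = 1/4`, `h (2m) = m ((2m-3)‼)²/π` for `m ≥ 1`, and `h k = 0` otherwise. -/
noncomputable def hDeriv (k : ℕ) : ℝ :=
  if k = 1 then 1 / 4
  else if 2 ∣ k ∧ k ≠ 0 then
    ((k / 2 : ℕ) : ℝ) * ((Nat.doubleFactorial (k - 3) : ℝ)) ^ 2 / Real.pi
  else 0

/-- The NTK spherical-harmonics coefficients
`β_ℓ = λ ∑' m, h(ℓ+2m) / (2^{ℓ+2m} m! (λ)_{ℓ+m+1})` with `λ = (d-2)/2`. -/
noncomputable def betaCoef (d : ℕ) (ℓ : ℕ) : ℝ :=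
  (((d : ℝ) - 2) / 2) *
    ∑' m : ℕ, hDeriv (ℓ + 2 * m) /
      (2 ^ (ℓ + 2 * m) * (Nat.factorial m : ℝ) *
        Polynomial.eval (((d : ℝ) - 2) / 2) (ascPochhammer ℝ (ℓ + m + 1)))

open Polynomial Nat

lemma ascPoch_pos {x : ℝ} (hx : 0 < x) : ∀ n, 0 < (ascPochhammer ℝ n).eval x
  | 0 => by simp
  | (n+1) => by
      rw [ascPochhammer_succ_eval]
      exact mul_pos (ascPoch_pos hx n) (by positivity)

lemma ascPoch_two_eval (x : ℝ) : (ascPochhammer ℝ 2).eval x = x * (x + 1) := by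
  rw [show (2:ℕ) = 1 + 1 from rfl, ascPochhammer_succ_eval, ascPochhammer_one]
  simp

lemma ascPoch_split (x : ℝ) (j : ℕ) :
    (ascPochhammer ℝ (2 + j)).eval x
      = x * (x + 1) * (ascPochhammer ℝ j).eval (x + 2) := by
  rw [← ascPochhammer_mul, eval_mul, eval_comp]
  simp [ascPoch_two_eval]

lemma ascPoch_lb {x : ℝ} (hx : (5:ℝ)/2 ≤ x) :
    ∀ j, ((2*j+3)‼ : ℝ) ≤ 3 * 2 ^ j * (ascPochhammer ℝ j).eval x
  | 0 => by norm_num [Nat.doubleFactorial]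
  | (j+1) => by
      have ih := ascPoch_lb hx j
      rw [ascPochhammer_succ_eval]
      have h1 : (2*(j+1)+3 : ℕ) = (2*j+3) + 2 := by ring
      rw [h1, Nat.doubleFactorial_add_two]
      push_cast
      have hP : (0:ℝ) < (ascPochhammer ℝ j).eval x := ascPoch_pos (by linarith) j
      have hDF : (0:ℝ) ≤ ((2*j+3)‼ : ℝ) := by positivity
      have hxj : ((2*j+3 : ℕ):ℝ) + 2 ≤ 2 * (x + j) := by push_cast; linarith
      calc ((2*(j:ℝ)+3+2)) * ((2*j+3)‼ : ℝ)
          ≤ (2 * (x + j)) * (3 * 2 ^ j * (ascPochhammer ℝ j).eval x) := by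
            apply mul_le_mul (by push_cast at hxj ⊢; linarith) ih hDF (by linarith)
        _ = 3 * 2 ^ (j+1) * ((ascPochhammer ℝ j).eval x * (x + j)) := by ring

lemma numeric_df : ∀ k : ℕ,
    10*(k+2)^2*(k+3)*((2*k+1)‼)^2 ≤ 2^(k+2)*(k+2)!*((2*k+5)‼)
  | 0 => by decide
  | (k+1) => by
      have ih := numeric_df k
      have h1 : (2*(k+1)+1)‼ = (2*k+3) * (2*k+1)‼ := by
        rw [show 2*(k+1)+1 = (2*k+1)+2 by ring, Nat.doubleFactorial_add_two]
      have h2 : (2*(k+1)+5)‼ = (2*k+7) * (2*k+5)‼ := by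
        rw [show 2*(k+1)+5 = (2*k+5)+2 by ring, Nat.doubleFactorial_add_two]
      have h3 : (k+1+2)! = (k+3) * (k+2)! := by
        rw [show k+1+2 = (k+2)+1 by ring, Nat.factorial_succ]
      rw [h1, h2, h3]
      have key : (k+4)*(2*k+3)^2 ≤ 2*(2*k+7)*(k+2)^2 := by nlinarith
      refine Nat.le_of_mul_le_mul_left ?_ (show 0 < (k+2)^2 by positivity)
      calc (k+2)^2 * (10*(k+1+2)^2*(k+1+3)*((2*k+3)*(2*k+1)‼)^2)
            = ((k+4)*(2*k+3)^2) * ((k+3) * (10*(k+2)^2*(k+3)*((2*k+1)‼)^2)) := by ring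
          _ ≤ (2*(2*k+7)*(k+2)^2) * ((k+3) * (2^(k+2)*(k+2)!*((2*k+5)‼))) := by
              exact Nat.mul_le_mul key (Nat.mul_le_mul_left _ ih)
          _ = (k+2)^2 * (2^(k+1+2)*((k+3)*(k+2)!)*((2*k+7)*(2*k+5)‼)) := by ring

lemma hDeriv_nonneg (k : ℕ) : 0 ≤ hDeriv k := by
  unfold hDeriv
  split_ifs
  · norm_num
  · positivity
  · exact le_refl _

lemma hDeriv_odd (b : ℕ) (hb : b ≠ 0) : hDeriv (1 + 2*b) = 0 := by
  unfold hDeriv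
  rw [if_neg (by omega), if_neg (by omega)]

lemma hDeriv_two_mul (m : ℕ) (hm : m ≠ 0) :
    hDeriv (2*m) = (m:ℝ) * ((2*m-3)‼ : ℝ)^2 / Real.pi := by
  unfold hDeriv
  rw [if_neg (by omega), if_pos ⟨⟨m, rfl⟩, by omega⟩,
    Nat.mul_div_cancel_left m (by norm_num)]

lemma term_bound {l : ℝ} (hl : 1/2 ≤ l) (k : ℕ) :
    hDeriv (0 + 2*(k+2)) /
      (2^(0 + 2*(k+2)) * (((k+2) ! : ℕ) : ℝ) * (ascPochhammer ℝ (0+(k+2)+1)).eval l)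
    ≤ (1/(20*l*(l+1))) * (1/(k+2) - 1/(k+3)) := by
  have lpos : (0:ℝ) < l := by linarith
  have l1pos : (0:ℝ) < l + 1 := by linarith
  have hπ : (3:ℝ) < Real.pi := Real.pi_gt_three
  set X : ℝ := (((2*k+1)‼ : ℕ) : ℝ) with hX
  set D5 : ℝ := (((2*k+5)‼ : ℕ) : ℝ) with hD5
  set F : ℝ := (((k+2) ! : ℕ) : ℝ) with hF
  set E : ℝ := (ascPochhammer ℝ (k+1)).eval (l+2) with hE
  have hEpos : 0 < E := ascPoch_pos (by linarith) _
  have hFpos : 0 < F := by simp [hF]; positivity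
  have hXnn : 0 ≤ X := by positivity
  have hsplit : (ascPochhammer ℝ (0+(k+2)+1)).eval l = l * (l+1) * E := by
    rw [show 0+(k+2)+1 = 2+(k+1) by ring, ascPoch_split]
  have hnumer : hDeriv (0 + 2*(k+2)) = ((k:ℝ)+2) * X^2 / Real.pi := by
    rw [show 0 + 2*(k+2) = 2*(k+2) by ring, hDeriv_two_mul (k+2) (by omega),
      show 2*(k+2)-3 = 2*k+1 by omega, hX]
    push_cast
    ring
  have hElb : D5 ≤ 3 * 2^(k+1) * E := by
    have := ascPoch_lb (x := l + 2) (by linarith) (k+1)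
    rw [show 2*(k+1)+3 = 2*k+5 by ring] at this
    exact this
  have hnum : 10*((k:ℝ)+2)^2*((k:ℝ)+3)*X^2 ≤ 2^(k+2)*F*D5 := by
    have h := numeric_df k
    rw [hX, hF, hD5]
    exact_mod_cast h
  have hBpos : (0:ℝ) < 2^(0 + 2*(k+2)) * F * (l * (l+1) * E) := by positivity
  rw [hsplit, hnumer, show (1/(20*l*(l+1))) * (1/(k+2) - 1/(k+3))
      = 1 / (20*l*(l+1)*(k+2)*(k+3)) by field_simp; ring,
    div_le_div_iff₀ hBpos (by positivity)]
  have key : ((k:ℝ)+2) * X^2 / Real.pi * (20*(k+2)*(k+3)) ≤ 2^(0+2*(k+2)) * F * E := by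
    rw [div_mul_eq_mul_div, div_le_iff₀ Real.pi_pos]
    have e1 : ((k:ℝ)+2) * X^2 * (20*(k+2)*(k+3))
        = 2 * (10*((k:ℝ)+2)^2*((k:ℝ)+3)*X^2) := by ring
    calc ((k:ℝ)+2) * X^2 * (20*(k+2)*(k+3))
        = 2 * (10*((k:ℝ)+2)^2*((k:ℝ)+3)*X^2) := e1
      _ ≤ 2 * (2^(k+2)*F*D5) := by linarith
      _ ≤ 2 * (2^(k+2)*F*(3 * 2^(k+1) * E)) := by
          have : 2^(k+2)*F*D5 ≤ 2^(k+2)*F*(3 * 2^(k+1) * E) := by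
            apply mul_le_mul_of_nonneg_left hElb (by positivity)
          linarith
      _ = 2^(0+2*(k+2)) * F * E * 3 := by ring
      _ ≤ 2^(0+2*(k+2)) * F * E * Real.pi := by
          apply mul_le_mul_of_nonneg_left (le_of_lt hπ) (by positivity)
  calc ((k:ℝ)+2) * X^2 / Real.pi * (20*l*(l+1)*(k+2)*(k+3))
      = (((k:ℝ)+2) * X^2 / Real.pi * (20*(k+2)*(k+3))) * (l*(l+1)) := by ring
    _ ≤ (2^(0+2*(k+2)) * F * E) * (l*(l+1)) := by
        apply mul_le_mul_of_nonneg_right key (by positivity)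
    _ = 1 * (2^(0 + 2*(k+2)) * F * (l * (l+1) * E)) := by ring

/-- For `d ≥ 3`, the NTK eigenvalue coefficients satisfy `β_1 = 1/(4d)` and
`β_0 < β_1`. -/
theorem betaCoef_one_eq_and_zero_lt_one (d : ℕ) (hd : 3 ≤ d) :
    betaCoef d 1 = 1 / (4 * (d : ℝ)) ∧ betaCoef d 0 < betaCoef d 1 := by
  have hd3 : (3:ℝ) ≤ (d:ℝ) := by exact_mod_cast hd
  set l : ℝ := ((d:ℝ) - 2) / 2 with hldef
  have hl : 1/2 ≤ l := by rw [hldef]; linarith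
  have lpos : 0 < l := by linarith
  have l1pos : 0 < l + 1 := by linarith
  have hπ : (3:ℝ) < Real.pi := Real.pi_gt_three
  -- Part 1 : betaCoef d 1 = 1/(4d)
  have part1 : betaCoef d 1 = 1 / (4 * (d:ℝ)) := by
    unfold betaCoef
    rw [← hldef]
    rw [tsum_eq_single 0 (fun b hb => by
      rw [hDeriv_odd b hb, zero_div])]
    have h1 : (1 + 2*0 : ℕ) = 1 := by norm_num
    have h2 : (1 + 0 + 1 : ℕ) = 2 := by norm_num
    rw [h1, h2, ascPoch_two_eval]
    have hD1 : hDeriv 1 = 1/4 := by unfold hDeriv; rw [if_pos rfl]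
    rw [hD1]
    have hdne : (d:ℝ) ≠ 0 := by linarith
    have h3 : l + 1 = (d:ℝ)/2 := by rw [hldef]; ring
    rw [show (2:ℝ)^(1:ℕ) = 2 by norm_num]
    field_simp
    rw [Nat.factorial_zero, Nat.cast_one]
    nlinarith [sq_nonneg ((d:ℝ))]
  refine ⟨part1, ?_⟩
  -- Part 2
  set g : ℕ → ℝ := fun m => hDeriv (0 + 2*m) /
      (2 ^ (0 + 2*m) * (Nat.factorial m : ℝ) *
        Polynomial.eval l (ascPochhammer ℝ (0 + m + 1))) with hgdef
  have hg0 : g 0 = 0 := by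
    have : hDeriv (0 + 2*0) = 0 := by
      unfold hDeriv
      rw [if_neg (by omega), if_neg (by omega)]
    simp only [hgdef]
    rw [this, zero_div]
  have hg1 : g 1 = 1 / (4 * Real.pi * (l * (l+1))) := by
    have h1 : hDeriv (0 + 2*1) = 1 / Real.pi := by
      rw [show (0 + 2*1 : ℕ) = 2*1 by norm_num, hDeriv_two_mul 1 (by norm_num)]
      norm_num [Nat.doubleFactorial]
    have hπ0 : Real.pi ≠ 0 := Real.pi_ne_zero
    have hl0 : l ≠ 0 := by linarith
    have hl1 : l + 1 ≠ 0 := by linarith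
    simp only [hgdef]
    rw [h1, show (0 + 1 + 1 : ℕ) = 2 by norm_num, ascPoch_two_eval]
    norm_num [Nat.factorial_one]
    field_simp
  have hgnn : ∀ m, 0 ≤ g m := by
    intro m
    apply div_nonneg (hDeriv_nonneg _)
    have := ascPoch_pos lpos (0 + m + 1)
    positivity
  have hgk : ∀ k : ℕ, g (k+2) ≤ (1/(20*l*(l+1))) * (1/(k+2) - 1/(k+3)) :=
    fun k => term_bound hl k
  -- partial sums
  have hpsum : ∀ n : ℕ, ∑ i ∈ Finset.range (n+2), g i
      ≤ 1/(4*Real.pi*(l*(l+1))) + (1/(20*l*(l+1))) * (1/2 - 1/(n+2)) := by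
    intro n
    induction n with
    | zero =>
        rw [Finset.sum_range_succ, Finset.sum_range_one, hg0, hg1]
        norm_num
    | succ n ih =>
        rw [show n+1+2 = (n+2)+1 by ring, Finset.sum_range_succ]
        have hb := hgk n
        have : (1/(20*l*(l+1))) * (1/2 - 1/(n+2)) + (1/(20*l*(l+1))) * (1/(n+2) - 1/(n+3))
            = (1/(20*l*(l+1))) * (1/2 - 1/(n+1+2)) := by push_cast; ring
        push_cast at hb ⊢
        linarith
  have hc : ∀ n : ℕ, ∑ i ∈ Finset.range n, g i
      ≤ 1/(4*Real.pi*(l*(l+1))) + (1/(20*l*(l+1))) * (1/2) := by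
    intro n
    have h1 : ∑ i ∈ Finset.range n, g i ≤ ∑ i ∈ Finset.range (n+2), g i := by
      apply Finset.sum_le_sum_of_subset_of_nonneg
      · exact Finset.range_subset_range.2 (by omega)
      · exact fun i _ _ => hgnn i
    have h2 := hpsum n
    have h3 : (0:ℝ) ≤ 1/(20*l*(l+1)) := by positivity
    have h4 : (0:ℝ) < 1/((n:ℝ)+2) := by positivity
    nlinarith
  have htsum : ∑' m, g m ≤ 1/(4*Real.pi*(l*(l+1))) + (1/(20*l*(l+1))) * (1/2) :=
    Real.tsum_le_of_sum_range_le hgnn hc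
  have hβ0 : betaCoef d 0 = l * ∑' m, g m := by
    unfold betaCoef
    rw [← hldef, hgdef]
  rw [hβ0, part1]
  have step1 : l * ∑' m, g m ≤ l * (1/(4*Real.pi*(l*(l+1))) + (1/(20*l*(l+1))) * (1/2)) :=
    mul_le_mul_of_nonneg_left htsum (le_of_lt lpos)
  have step2 : l * (1/(4*Real.pi*(l*(l+1))) + (1/(20*l*(l+1))) * (1/2)) < 1/(4*(d:ℝ)) := by
    have hA : l * (1/(4*Real.pi*(l*(l+1))) + (1/(20*l*(l+1))) * (1/2))
        = (1/(4*Real.pi) + 1/40) * (1/(l+1)) := by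
      have hπ0 : Real.pi ≠ 0 := Real.pi_ne_zero
      have hl0 : l ≠ 0 := by linarith
      have hl1 : l + 1 ≠ 0 := by linarith
      field_simp
      ring
    have hB : (1:ℝ)/(4*(d:ℝ)) = (1/8) * (1/(l+1)) := by
      have h3 : l + 1 = (d:ℝ)/2 := by rw [hldef]; ring
      rw [h3]
      have hdne : (d:ℝ) ≠ 0 := by linarith
      field_simp
      ring
    rw [hA, hB]
    apply mul_lt_mul_of_pos_right _ (by positivity)
    have h4 : 1/(4*Real.pi) < 1/10 := by
      rw [div_lt_div_iff₀ (by positivity) (by norm_num)]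
      nlinarith
    linarith
  linarith
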